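/- Let θ ∈ (0, π/2]. Let u₁, u₂ be unit vectors in ℝ² (Euclidean) such that the angle between the lines ℝu₁ and ℝu₂ is at least θ, and let w₁, w₂ be unit vectors in ℝ² such that the angle between the lines ℝw₁ and ℝw₂ is at least θ. Let T : ℝ² → ℝ² be a linear map and let a₁₁, a₂₁, a₁₂, a₂₂ ∈ ℝ be defined by T u₁ = a₁₁ w₁ + a₂₁ w₂ and T u₂ = a₁₂ w₁ + a₂₂ w₂. Set ‖T‖_* := max{|a₁₁|, |a₁₂|, |a₂₁|, |a₂₂|} and let ‖T‖ be the operator norm of T with respect to the Euclidean norm. Then: (1) ‖T‖ ≤ 4·sin(θ)⁻¹·‖T‖_*, and (2) ‖T‖_* ≤ sin(θ)⁻¹·‖T‖. -/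

import Mathlib

open Set Real
open scoped RealInnerProductSpace

/-- The Euclidean plane. -/
abbrev E2 : Type := EuclideanSpace ℝ (Fin 2)

/-- The angle in `[0, π/2]` between the lines `ℝu` and `ℝv` in the Euclidean plane. -/
noncomputable def lineAngle (u v : E2) : ℝ := Real.arccos (|⟪u, v⟫| / (‖u‖ * ‖v‖))

private def det2 (u v : E2) : ℝ := u 0 * v 1 - u 1 * v 0

private lemma inner_eval (u v : E2) : ⟪u, v⟫ = u 0 * v 0 + u 1 * v 1 := by
  simp [PiLp.inner_apply, Fin.sum_univ_two, RCLike.inner_apply, conj_trivial]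
  ring

private lemma lagrange (u v : E2) : ⟪u, v⟫ ^ 2 + det2 u v ^ 2 = ‖u‖ ^ 2 * ‖v‖ ^ 2 := by
  rw [← real_inner_self_eq_norm_sq, ← real_inner_self_eq_norm_sq,
    inner_eval, inner_eval, inner_eval, det2]
  ring

private lemma abs_det2_le (u v : E2) : |det2 u v| ≤ ‖u‖ * ‖v‖ := by
  have h := lagrange u v
  have h2 : det2 u v ^ 2 ≤ (‖u‖ * ‖v‖) ^ 2 := by nlinarith [sq_nonneg ⟪u, v⟫]
  calc |det2 u v| = Real.sqrt (det2 u v ^ 2) := (Real.sqrt_sq_eq_abs _).symm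
    _ ≤ Real.sqrt ((‖u‖ * ‖v‖) ^ 2) := Real.sqrt_le_sqrt h2
    _ = ‖u‖ * ‖v‖ := Real.sqrt_sq (by positivity)

private lemma abs_inner_le_cos {θ : ℝ} (hθ : 0 ≤ θ) (u v : E2) (hu : ‖u‖ = 1) (hv : ‖v‖ = 1)
    (h : θ ≤ lineAngle u v) : |⟪u, v⟫| ≤ Real.cos θ := by
  have h1 : |⟪u, v⟫| ≤ 1 := by simpa [hu, hv] using abs_real_inner_le_norm u v
  have ht : lineAngle u v = Real.arccos |⟪u, v⟫| := by
    unfold lineAngle; rw [hu, hv]; norm_num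
  rw [ht] at h
  have := Real.cos_le_cos_of_nonneg_of_le_pi hθ (Real.arccos_le_pi _) h
  rwa [Real.cos_arccos (by linarith [abs_nonneg ⟪u, v⟫]) h1] at this

private lemma sin_le_abs_det2 {θ : ℝ} (hθ : θ ∈ Set.Ioc 0 (π / 2)) (u v : E2)
    (hu : ‖u‖ = 1) (hv : ‖v‖ = 1) (h : θ ≤ lineAngle u v) : Real.sin θ ≤ |det2 u v| := by
  have hcos := abs_inner_le_cos hθ.1.le u v hu hv h
  have hlag := lagrange u v
  rw [hu, hv] at hlag
  have hpyth := Real.sin_sq_add_cos_sq θ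
  have hsnn : 0 ≤ Real.sin θ := Real.sin_nonneg_of_nonneg_of_le_pi hθ.1.le
    (by linarith [Real.pi_pos, hθ.2])
  have h2 : Real.sin θ ^ 2 ≤ det2 u v ^ 2 := by
    nlinarith [abs_nonneg ⟪u, v⟫, sq_abs ⟪u, v⟫, Real.cos_nonneg_of_mem_Icc
      (by constructor <;> nlinarith [Real.pi_pos, hθ.1, hθ.2] : θ ∈ Set.Icc (-(π/2)) (π/2))]
  calc Real.sin θ = Real.sqrt (Real.sin θ ^ 2) := (Real.sqrt_sq hsnn).symm
    _ ≤ Real.sqrt (det2 u v ^ 2) := Real.sqrt_le_sqrt h2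
    _ = |det2 u v| := Real.sqrt_sq_eq_abs _

private lemma decomp (u v : E2) (hd : det2 u v ≠ 0) (x : E2) :
    x = ((det2 x v) / det2 u v) • u + ((det2 u x) / det2 u v) • v := by
  ext i
  have h0 : (((det2 x v) / det2 u v) • u + ((det2 u x) / det2 u v) • v) i
      = (det2 x v) / det2 u v * u i + (det2 u x) / det2 u v * v i := by simp
  rw [h0]
  unfold det2 at *
  fin_cases i <;> simp only [Fin.zero_eta, Fin.mk_one] <;>
    rw [div_mul_eq_mul_div, div_mul_eq_mul_div, ← add_div, eq_div_iff hd] <;> ring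

private lemma det2_smul_left (u v : E2) (a b : ℝ) :
    det2 (a • u + b • v) v = a * det2 u v := by
  simp only [det2]
  have h0 : ∀ i : Fin 2, (a • u + b • v) i = a * u i + b * v i := by intro i; simp
  rw [h0, h0]; ring

private lemma det2_smul_right (u v : E2) (a b : ℝ) :
    det2 u (a • u + b • v) = b * det2 u v := by
  simp only [det2]
  have h0 : ∀ i : Fin 2, (a • u + b • v) i = a * u i + b * v i := by intro i; simp
  rw [h0, h0]; ring

/-- Comparison between the operator norm and the "norm of the maximum" of the matrix of a
linear map with respect to bases of unit vectors whose lines make an angle at least `θ`: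
`‖T‖ ≤ 4 sin(θ)⁻¹ ‖T‖_*` and `‖T‖_* ≤ sin(θ)⁻¹ ‖T‖`. -/
theorem opNorm_vs_maxNorm
    (θ : ℝ) (hθ : θ ∈ Set.Ioc 0 (π / 2))
    (u₁ u₂ w₁ w₂ : E2)
    (hu₁ : ‖u₁‖ = 1) (hu₂ : ‖u₂‖ = 1) (hw₁ : ‖w₁‖ = 1) (hw₂ : ‖w₂‖ = 1)
    (hangu : θ ≤ lineAngle u₁ u₂) (hangw : θ ≤ lineAngle w₁ w₂)
    (T : E2 →L[ℝ] E2) (a₁₁ a₂₁ a₁₂ a₂₂ : ℝ)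
    (hTu₁ : T u₁ = a₁₁ • w₁ + a₂₁ • w₂) (hTu₂ : T u₂ = a₁₂ • w₁ + a₂₂ • w₂) :
    ‖T‖ ≤ 4 * (Real.sin θ)⁻¹ * max (max |a₁₁| |a₁₂|) (max |a₂₁| |a₂₂|) ∧
    max (max |a₁₁| |a₁₂|) (max |a₂₁| |a₂₂|) ≤ (Real.sin θ)⁻¹ * ‖T‖ := by
  have hs : 0 < Real.sin θ := Real.sin_pos_of_pos_of_lt_pi hθ.1
    (by linarith [Real.pi_pos, hθ.2])
  have hsinv : 0 < (Real.sin θ)⁻¹ := inv_pos.mpr hs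
  set M := max (max |a₁₁| |a₁₂|) (max |a₂₁| |a₂₂|) with hM
  have hM0 : 0 ≤ M := le_trans (abs_nonneg a₁₁) (le_max_of_le_left (le_max_left _ _))
  have ha11 : |a₁₁| ≤ M := le_max_of_le_left (le_max_left _ _)
  have ha12 : |a₁₂| ≤ M := le_max_of_le_left (le_max_right _ _)
  have ha21 : |a₂₁| ≤ M := le_max_of_le_right (le_max_left _ _)
  have ha22 : |a₂₂| ≤ M := le_max_of_le_right (le_max_right _ _)
  have hdu : Real.sin θ ≤ |det2 u₁ u₂| := sin_le_abs_det2 hθ u₁ u₂ hu₁ hu₂ hangu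
  have hdw : Real.sin θ ≤ |det2 w₁ w₂| := sin_le_abs_det2 hθ w₁ w₂ hw₁ hw₂ hangw
  have hdu0 : det2 u₁ u₂ ≠ 0 := by
    intro h; rw [h] at hdu; simp at hdu; linarith
  constructor
  · -- ‖T‖ ≤ 4 sinθ⁻¹ M
    apply ContinuousLinearMap.opNorm_le_bound T (by positivity)
    intro x
    set c₁ : ℝ := det2 x u₂ / det2 u₁ u₂ with hc₁def
    set c₂ : ℝ := det2 u₁ x / det2 u₁ u₂ with hc₂def
    have hx : x = c₁ • u₁ + c₂ • u₂ := decomp u₁ u₂ hdu0 x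
    have hc₁ : |c₁| ≤ (Real.sin θ)⁻¹ * ‖x‖ := by
      rw [hc₁def, abs_div]
      have h1 : |det2 x u₂| ≤ ‖x‖ := by
        have := abs_det2_le x u₂; rwa [hu₂, mul_one] at this
      rw [inv_mul_eq_div]
      exact div_le_div₀ (norm_nonneg x) h1 hs hdu
    have hc₂ : |c₂| ≤ (Real.sin θ)⁻¹ * ‖x‖ := by
      rw [hc₂def, abs_div]
      have h1 : |det2 u₁ x| ≤ ‖x‖ := by
        have := abs_det2_le u₁ x; rwa [hu₁, one_mul] at this
      rw [inv_mul_eq_div]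
      exact div_le_div₀ (norm_nonneg x) h1 hs hdu
    have hTx : T x = (c₁ * a₁₁ + c₂ * a₁₂) • w₁ + (c₁ * a₂₁ + c₂ * a₂₂) • w₂ := by
      conv_lhs => rw [hx]
      rw [map_add, map_smul, map_smul, hTu₁, hTu₂]
      module
    have hb1 : |c₁| * |a₁₁| ≤ ((Real.sin θ)⁻¹ * ‖x‖) * M :=
      mul_le_mul hc₁ ha11 (abs_nonneg _) (by positivity)
    have hb2 : |c₂| * |a₁₂| ≤ ((Real.sin θ)⁻¹ * ‖x‖) * M :=
      mul_le_mul hc₂ ha12 (abs_nonneg _) (by positivity)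
    have hb3 : |c₁| * |a₂₁| ≤ ((Real.sin θ)⁻¹ * ‖x‖) * M :=
      mul_le_mul hc₁ ha21 (abs_nonneg _) (by positivity)
    have hb4 : |c₂| * |a₂₂| ≤ ((Real.sin θ)⁻¹ * ‖x‖) * M :=
      mul_le_mul hc₂ ha22 (abs_nonneg _) (by positivity)
    calc ‖T x‖ = ‖(c₁ * a₁₁ + c₂ * a₁₂) • w₁ + (c₁ * a₂₁ + c₂ * a₂₂) • w₂‖ := by rw [hTx]
      _ ≤ ‖(c₁ * a₁₁ + c₂ * a₁₂) • w₁‖ + ‖(c₁ * a₂₁ + c₂ * a₂₂) • w₂‖ := norm_add_le _ _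
      _ = |c₁ * a₁₁ + c₂ * a₁₂| + |c₁ * a₂₁ + c₂ * a₂₂| := by
          rw [norm_smul, norm_smul, hw₁, hw₂]; simp [Real.norm_eq_abs]
      _ ≤ (|c₁| * |a₁₁| + |c₂| * |a₁₂|) + (|c₁| * |a₂₁| + |c₂| * |a₂₂|) := by
          gcongr <;> exact (abs_add_le _ _).trans (by rw [abs_mul, abs_mul])
      _ ≤ 4 * (Real.sin θ)⁻¹ * M * ‖x‖ := by linarith
  · -- M ≤ sinθ⁻¹ ‖T‖
    have key : ∀ a : ℝ, |a| * Real.sin θ ≤ ‖T‖ → |a| ≤ (Real.sin θ)⁻¹ * ‖T‖ := by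
      intro a h
      rw [inv_mul_eq_div, le_div_iff₀ hs]
      exact h
    have hTn : ∀ u : E2, ‖u‖ = 1 → ‖T u‖ ≤ ‖T‖ := by
      intro u hu
      have := T.le_opNorm u
      rwa [hu, mul_one] at this
    have bound : ∀ (u : E2), ‖u‖ = 1 → ∀ a b : ℝ, T u = a • w₁ + b • w₂ →
        |a| ≤ (Real.sin θ)⁻¹ * ‖T‖ ∧ |b| ≤ (Real.sin θ)⁻¹ * ‖T‖ := by
      intro u hu a b hT
      have hnorm : ‖T u‖ ≤ ‖T‖ := hTn u hu
      have hda : det2 (T u) w₂ = a * det2 w₁ w₂ := by rw [hT]; exact det2_smul_left w₁ w₂ a b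
      have hdb : det2 w₁ (T u) = b * det2 w₁ w₂ := by rw [hT]; exact det2_smul_right w₁ w₂ a b
      constructor
      · apply key
        have h1 : |det2 (T u) w₂| ≤ ‖T‖ := by
          have := abs_det2_le (T u) w₂; rw [hw₂, mul_one] at this; linarith
        rw [hda, abs_mul] at h1
        nlinarith [abs_nonneg a]
      · apply key
        have h1 : |det2 w₁ (T u)| ≤ ‖T‖ := by
          have := abs_det2_le w₁ (T u); rw [hw₁, one_mul] at this; linarith
        rw [hdb, abs_mul] at h1
        nlinarith [abs_nonneg b]
    obtain ⟨h11, h21⟩ := bound u₁ hu₁ a₁₁ a₂₁ hTu₁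
    obtain ⟨h12, h22⟩ := bound u₂ hu₂ a₁₂ a₂₂ hTu₂
    rw [hM]
    exact max_le (max_le h11 h12) (max_le h21 h22)
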